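/- arXiv:2011.04176 — 10 statements merged into one kernel-verified Lean document; each statement's English description precedes it below -/
import Mathlib

section
/- If Z₁ and Z₂ are two Markov blankets of a target T (i.e., T is conditionally independent of all remaining variables given Z₁, and likewise given Z₂), and additionally T is conditionally independent of Z₁ \ Z₂ given Z₁ ∩ Z₂, then Z₁ ∩ Z₂ is also a Markov blanket of T. -/
open Set

/-- `Z` is a Markov blanket of `T` w.r.t. the conditional-independence relation `CI`. -/
def IsMarkovBlanket {V : Type*} (CI : Set V → Set V → Set V → Prop) (T : V) (Z : Set V) : Prop :=
  Z ⊆ Set.univ \ {T} ∧ CI {T} ((Set.univ \ Z) \ {T}) Z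

/-- A Markov boundary: an inclusion-minimal Markov blanket. -/
def IsMarkovBoundary {V : Type*} (CI : Set V → Set V → Set V → Prop) (T : V) (Z : Set V) : Prop :=
  IsMarkovBlanket CI T Z ∧ ∀ Z' ⊂ Z, ¬ IsMarkovBlanket CI T Z'

/-- `X` and `Y` contain equivalent information about `T` conditioned on `Z`. -/
def EquivInfo {V : Type*} (CI : Set V → Set V → Set V → Prop) (T : V) (X Y Z : Set V) : Prop :=
  ¬ CI {T} X Z ∧ ¬ CI {T} Y Z ∧ CI {T} X (Y ∪ Z) ∧ CI {T} Y (X ∪ Z)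

theorem intersection_is_blanket_of_CI {V : Type*} [Fintype V]
    (CI : Set V → Set V → Set V → Prop)
(symm : ∀ A B C : Set V, CI A B C → CI B A C)
    (decomp : ∀ A B C Z : Set V, CI A (B ∪ C) Z → CI A B Z)
    (weakUnion : ∀ A B C Z : Set V, CI A (B ∪ C) Z → CI A B (Z ∪ C))
    (contraction : ∀ A B C Z : Set V, CI A B (Z ∪ C) → CI A C Z → CI A (B ∪ C) Z)
    (T : V) (Z₁ Z₂ : Set V)
    (h₁ : IsMarkovBlanket CI T Z₁) (h₂ : IsMarkovBlanket CI T Z₂)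
    (h : CI {T} (Z₁ \ Z₂) (Z₁ ∩ Z₂)) :
    IsMarkovBlanket CI T (Z₁ ∩ Z₂) := by
  obtain ⟨hs₁, hc₁⟩ := h₁
  constructor
  · exact fun x hx => hs₁ hx.1
  · have hT : T ∉ Z₁ := fun hT => (hs₁ hT).2 rfl
    have e1 : (Z₁ ∩ Z₂) ∪ (Z₁ \ Z₂) = Z₁ := by
      exact Set.inter_union_diff Z₁ Z₂
    have h1' : CI {T} ((Set.univ \ Z₁) \ {T}) ((Z₁ ∩ Z₂) ∪ (Z₁ \ Z₂)) := by
      rw [e1]; exact hc₁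
    have key := contraction {T} ((Set.univ \ Z₁) \ {T}) (Z₁ \ Z₂) (Z₁ ∩ Z₂) h1' h
    have e2 : ((Set.univ \ Z₁) \ {T}) ∪ (Z₁ \ Z₂) = (Set.univ \ (Z₁ ∩ Z₂)) \ {T} := by
      ext x
      simp only [Set.mem_union, Set.mem_diff, Set.mem_univ, true_and, Set.mem_singleton_iff,
        Set.mem_inter_iff]
      constructor
      · rintro (⟨hx1, hx2⟩ | ⟨hx1, hx2⟩)
        · exact ⟨fun h' => hx1 h'.1, hx2⟩
        · exact ⟨fun h' => hx2 h'.2, fun h' => hT (h' ▸ hx1)⟩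
      · rintro ⟨hx1, hx2⟩
        by_cases hZ : x ∈ Z₁
        · exact Or.inr ⟨hZ, fun h' => hx1 ⟨hZ, h'⟩⟩
        · exact Or.inl ⟨hZ, hx2⟩
    rwa [e2] at key
end

section
/- If a target T has two distinct Markov boundaries MB₁ and MB₂ (Markov blankets minimal under inclusion), then MB₁ \ MB₂ and MB₂ \ MB₁ contain equivalent information about T conditioned on MB₁ ∩ MB₂; that is, T is dependent on MB₁ \ MB₂ given MB₁ ∩ MB₂, T is dependent on MB₂ \ MB₁ given MB₁ ∩ MB₂, T is independent of MB₂ \ MB₁ given MB₁, and T is independent of MB₁ \ MB₂ given MB₂. Consequently, if no pair of subsets contains equivalent information about T, the Markov boundary of T is unique. -/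
open Set

theorem multiple_boundaries_equiv_info_and_uniqueness {V : Type*} [Fintype V]
    (CI : Set V → Set V → Set V → Prop)
(symm : ∀ A B C : Set V, CI A B C → CI B A C)
    (decomp : ∀ A B C Z : Set V, CI A (B ∪ C) Z → CI A B Z)
    (weakUnion : ∀ A B C Z : Set V, CI A (B ∪ C) Z → CI A B (Z ∪ C))
    (contraction : ∀ A B C Z : Set V, CI A B (Z ∪ C) → CI A C Z → CI A (B ∪ C) Z)
    (T : V) :
    (∀ MB₁ MB₂ : Set V, IsMarkovBoundary CI T MB₁ → IsMarkovBoundary CI T MB₂ →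
        MB₁ ≠ MB₂ →
      ¬ CI {T} (MB₁ \ MB₂) (MB₁ ∩ MB₂) ∧
      ¬ CI {T} (MB₂ \ MB₁) (MB₁ ∩ MB₂) ∧
      CI {T} (MB₂ \ MB₁) MB₁ ∧
      CI {T} (MB₁ \ MB₂) MB₂) ∧
    ((∀ X Y Z : Set V, ¬ EquivInfo CI T X Y Z) →
      ∀ MB₁ MB₂ : Set V, IsMarkovBoundary CI T MB₁ → IsMarkovBoundary CI T MB₂ →
        MB₁ = MB₂) := by
  -- helper 1: T ⫫ (B \ A) | A whenever A is a blanket and B ⊆ univ \ {T}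
  have h1 : ∀ A B : Set V, IsMarkovBoundary CI T A → IsMarkovBoundary CI T B →
      CI {T} (B \ A) A := by
    intro A B hA hB
    obtain ⟨⟨hAsub, hACI⟩, _⟩ := hA
    obtain ⟨⟨hBsub, _⟩, _⟩ := hB
    have hsub : B \ A ⊆ (Set.univ \ A) \ {T} := by
      intro x hx
      have hxT := hBsub hx.1
      exact ⟨⟨trivial, hx.2⟩, hxT.2⟩
    rw [← Set.union_diff_cancel hsub] at hACI
    exact decomp _ _ _ _ hACI
  -- helper 2: dependence of T on A \ B given A ∩ B
  have h2 : ∀ A B : Set V, IsMarkovBoundary CI T A → IsMarkovBoundary CI T B →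
      A ≠ B → ¬ CI {T} (A \ B) (A ∩ B) := by
    intro A B hA hB hne h
    obtain ⟨⟨hAsub, hACI⟩, hAmin⟩ := hA
    obtain ⟨⟨hBsub, hBCI⟩, hBmin⟩ := hB
    -- A ∩ B ⊂ A
    have hssub : A ∩ B ⊂ A := by
      refine ⟨Set.inter_subset_left, fun hAint => ?_⟩
      have hAB : A ⊆ B := fun x hx => ((hAint hx).2)
      exact hBmin A ⟨hAB, fun hBA => hne (Set.Subset.antisymm hAB hBA)⟩ ⟨hAsub, hACI⟩
    have hunion : A = (A ∩ B) ∪ (A \ B) := by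
      ext x; simp only [Set.mem_inter_iff, Set.mem_union, Set.mem_diff]; tauto
    have hACI' : CI {T} ((Set.univ \ A) \ {T}) ((A ∩ B) ∪ (A \ B)) := by
      rw [← hunion]; exact hACI
    have hcontr := contraction {T} ((Set.univ \ A) \ {T}) (A \ B) (A ∩ B) hACI' h
    have hset : ((Set.univ \ A) \ {T}) ∪ (A \ B) = (Set.univ \ (A ∩ B)) \ {T} := by
      ext x
      simp only [Set.mem_union, Set.mem_diff, Set.mem_singleton_iff, Set.mem_univ,
        Set.mem_inter_iff, true_and]
      constructor
      · rintro (⟨hx, hxT⟩ | ⟨hxA, hxB⟩)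
        · exact ⟨fun hc => hx hc.1, hxT⟩
        · exact ⟨fun hc => hxB hc.2, (hAsub hxA).2⟩
      · rintro ⟨hx, hxT⟩
        by_cases hxA : x ∈ A
        · exact Or.inr ⟨hxA, fun hxB => hx ⟨hxA, hxB⟩⟩
        · exact Or.inl ⟨hxA, hxT⟩
    rw [hset] at hcontr
    have hblanket : IsMarkovBlanket CI T (A ∩ B) :=
      ⟨fun x hx => hAsub hx.1, hcontr⟩
    exact hAmin (A ∩ B) hssub hblanket
  constructor
  · intro MB₁ MB₂ hMB₁ hMB₂ hne
    refine ⟨h2 MB₁ MB₂ hMB₁ hMB₂ hne, ?_, h1 MB₁ MB₂ hMB₁ hMB₂, h1 MB₂ MB₁ hMB₂ hMB₁⟩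
    rw [Set.inter_comm]
    exact h2 MB₂ MB₁ hMB₂ hMB₁ hne.symm
  · intro hnoEquiv MB₁ MB₂ hMB₁ hMB₂
    by_contra hne
    apply hnoEquiv (MB₁ \ MB₂) (MB₂ \ MB₁) (MB₁ ∩ MB₂)
    have e1 : (MB₂ \ MB₁) ∪ (MB₁ ∩ MB₂) = MB₂ := by
      ext x; simp only [Set.mem_union, Set.mem_diff, Set.mem_inter_iff]; tauto
    have e2 : (MB₁ \ MB₂) ∪ (MB₁ ∩ MB₂) = MB₁ := by
      ext x; simp only [Set.mem_union, Set.mem_diff, Set.mem_inter_iff]; tauto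
    refine ⟨h2 MB₁ MB₂ hMB₁ hMB₂ hne, ?_, ?_, ?_⟩
    · rw [Set.inter_comm]; exact h2 MB₂ MB₁ hMB₂ hMB₁ (Ne.symm hne)
    · rw [e1]; exact h1 MB₂ MB₁ hMB₂ hMB₁
    · rw [e2]; exact h1 MB₁ MB₂ hMB₁ hMB₂
end

section
/- Suppose T has two Markov boundaries MB₁ and MB₂. If T is conditionally independent of MB₁ \ MB₂ given MB₁ ∩ MB₂, then MB₁ ∩ MB₂ is a Markov blanket of T, contradicting minimality of MB₁; hence T is conditionally dependent on MB₁ \ MB₂ given MB₁ ∩ MB₂. -/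
open Set

theorem boundary_diff_dependent {V : Type*} [Fintype V]
    (CI : Set V → Set V → Set V → Prop)
(symm : ∀ A B C : Set V, CI A B C → CI B A C)
    (decomp : ∀ A B C Z : Set V, CI A (B ∪ C) Z → CI A B Z)
    (weakUnion : ∀ A B C Z : Set V, CI A (B ∪ C) Z → CI A B (Z ∪ C))
    (contraction : ∀ A B C Z : Set V, CI A B (Z ∪ C) → CI A C Z → CI A (B ∪ C) Z)
    (T : V) (MB₁ MB₂ : Set V)
    (h₁ : IsMarkovBoundary CI T MB₁) (h₂ : IsMarkovBoundary CI T MB₂)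
    (hne : MB₁ ≠ MB₂) :
    ¬ CI {T} (MB₁ \ MB₂) (MB₁ ∩ MB₂) := by
  intro hci
  -- MB₁ is not a subset of MB₂, else MB₁ ⊂ MB₂ contradicts minimality of MB₂
  have hnsub : ¬ MB₁ ⊆ MB₂ := by
    intro hs
    exact h₂.2 MB₁ (ssubset_of_subset_of_ne hs hne) h₁.1
  have hT1 : T ∉ MB₁ := fun h => (h₁.1.1 h).2 rfl
  -- key set identity
  have hset : (Set.univ \ MB₁) \ {T} ∪ (MB₁ \ MB₂) = (Set.univ \ (MB₁ ∩ MB₂)) \ {T} := by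
    ext x
    simp only [Set.mem_union, Set.mem_diff, Set.mem_univ, true_and, Set.mem_singleton_iff,
      Set.mem_inter_iff]
    constructor
    · rintro (⟨h1, h2⟩ | ⟨h1, h2⟩)
      · exact ⟨fun h => h1 h.1, h2⟩
      · exact ⟨fun h => h2 h.2, fun h => hT1 (h ▸ h1)⟩
    · rintro ⟨h1, h2⟩
      by_cases hx : x ∈ MB₁
      · exact Or.inr ⟨hx, fun h => h1 ⟨hx, h⟩⟩
      · exact Or.inl ⟨hx, h2⟩
  have hu : MB₁ ∩ MB₂ ∪ MB₁ \ MB₂ = MB₁ := by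
    ext x; simp only [Set.mem_union, Set.mem_inter_iff, Set.mem_diff]; tauto
  have hmb1 : CI {T} ((Set.univ \ MB₁) \ {T}) (MB₁ ∩ MB₂ ∪ MB₁ \ MB₂) := by
    rw [hu]; exact h₁.1.2
  have hkey := contraction {T} ((Set.univ \ MB₁) \ {T}) (MB₁ \ MB₂) (MB₁ ∩ MB₂) hmb1 hci
  rw [hset] at hkey
  have hblanket : IsMarkovBlanket CI T (MB₁ ∩ MB₂) :=
    ⟨fun x hx => h₁.1.1 hx.1, hkey⟩
  exact h₁.2 (MB₁ ∩ MB₂)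
    ⟨Set.inter_subset_left, fun hsub => hnsub fun x hx => ((hsub hx).2)⟩ hblanket
end

section
/- For a target T, if for all subsets X, Y, Z of the variable set not containing T, X and Y do not contain equivalent information about T conditioned on Z, then T has a unique Markov boundary. -/
open Set

theorem unique_boundary_of_no_equiv_info {V : Type*} [Fintype V]
    (CI : Set V → Set V → Set V → Prop)
(symm : ∀ A B C : Set V, CI A B C → CI B A C)
    (decomp : ∀ A B C Z : Set V, CI A (B ∪ C) Z → CI A B Z)
    (weakUnion : ∀ A B C Z : Set V, CI A (B ∪ C) Z → CI A B (Z ∪ C))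
    (contraction : ∀ A B C Z : Set V, CI A B (Z ∪ C) → CI A C Z → CI A (B ∪ C) Z)
    (T : V)
    (hNoEq : ∀ X Y Z : Set V, T ∉ X → T ∉ Y → T ∉ Z → ¬ EquivInfo CI T X Y Z) :
    ∀ MB₁ MB₂ : Set V, IsMarkovBoundary CI T MB₁ → IsMarkovBoundary CI T MB₂ →
      MB₁ = MB₂ := by
  intro MB₁ MB₂ h1 h2
  by_contra hne
  obtain ⟨⟨hsub1, hci1⟩, hmin1⟩ := h1
  obtain ⟨⟨hsub2, hci2⟩, hmin2⟩ := h2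
  set Z := MB₁ ∩ MB₂ with hZdef
  set X := MB₁ \ MB₂ with hXdef
  set Y := MB₂ \ MB₁ with hYdef
  have hT1 : T ∉ MB₁ := fun h => (hsub1 h).2 rfl
  have hT2 : T ∉ MB₂ := fun h => (hsub2 h).2 rfl
  have e1 : MB₁ = X ∪ Z := by
    ext x; simp only [hXdef, hZdef, mem_union, mem_diff, mem_inter_iff]; tauto
  have e2 : MB₂ = Y ∪ Z := by
    ext x; simp only [hYdef, hZdef, mem_union, mem_diff, mem_inter_iff]; tauto
  -- CI {T} X (Y ∪ Z)
  have hXrw : (univ \ MB₂) \ {T} = X ∪ (((univ \ MB₂) \ {T}) \ X) := by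
    ext x
    have hx : x ∈ MB₁ → x ≠ T := fun h hx => hT1 (hx ▸ h)
    simp only [hXdef, mem_union, mem_diff, mem_univ, mem_singleton_iff, true_and]
    tauto
  have hYrw : (univ \ MB₁) \ {T} = Y ∪ (((univ \ MB₁) \ {T}) \ Y) := by
    ext x
    have hx : x ∈ MB₂ → x ≠ T := fun h hx => hT2 (hx ▸ h)
    simp only [hYdef, mem_union, mem_diff, mem_univ, mem_singleton_iff, true_and]
    tauto
  have ciX : CI {T} X (Y ∪ Z) := by
    have := decomp {T} X _ MB₂ (hXrw ▸ hci2)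
    rwa [e2] at this
  have ciY : CI {T} Y (X ∪ Z) := by
    have := decomp {T} Y _ MB₁ (hYrw ▸ hci1)
    rwa [e1] at this
  have hTX : T ∉ X := fun h => hT1 h.1
  have hTY : T ∉ Y := fun h => hT2 h.1
  have hTZ : T ∉ Z := fun h => hT1 h.1
  have hdisj : CI {T} X Z ∨ CI {T} Y Z := by
    by_contra h
    push_neg at h
    exact hNoEq X Y Z hTX hTY hTZ ⟨h.1, h.2, ciX, ciY⟩
  -- key lemma: Z is a Markov blanket whenever CI {T} (MB \ Z) Z for a blanket MB ⊇ Z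
  have key : ∀ MB : Set V, Z ⊆ MB → T ∉ MB → CI {T} ((univ \ MB) \ {T}) MB →
      CI {T} (MB \ Z) Z → IsMarkovBlanket CI T Z := by
    intro MB hZMB hTMB hciMB hciD
    have hc1 : CI {T} ((univ \ MB) \ {T}) (Z ∪ (MB \ Z)) := by
      rwa [union_diff_cancel hZMB]
    have hc2 : CI {T} (((univ \ MB) \ {T}) ∪ (MB \ Z)) Z :=
      contraction {T} _ (MB \ Z) Z hc1 hciD
    have hset : ((univ \ MB) \ {T}) ∪ (MB \ Z) = (univ \ Z) \ {T} := by
      ext x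
      have hx : x ∈ MB → x ≠ T := fun h hx => hTMB (hx ▸ h)
      have hx2 : x ∈ Z → x ∈ MB := fun h => hZMB h
      simp only [mem_union, mem_diff, mem_univ, mem_singleton_iff, true_and]
      tauto
    refine ⟨fun x hx => ⟨trivial, ?_⟩, hset ▸ hc2⟩
    · rintro rfl; exact hTZ hx
  have hbl : IsMarkovBlanket CI T Z := by
    rcases hdisj with h | h
    · have : MB₁ \ Z = X := by
        ext x; simp only [hXdef, hZdef, mem_diff, mem_inter_iff]; tauto
      exact key MB₁ inter_subset_left hT1 hci1 (this ▸ h)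
    · have : MB₂ \ Z = Y := by
        ext x; simp only [hYdef, hZdef, mem_diff, mem_inter_iff]; tauto
      exact key MB₂ inter_subset_right hT2 hci2 (this ▸ h)
  have hne' : Z ≠ MB₁ ∨ Z ≠ MB₂ := by
    by_contra h
    push_neg at h
    exact hne (h.1.symm.trans h.2)
  rcases hne' with h | h
  · exact hmin1 Z (ssubset_iff_subset_ne.mpr ⟨inter_subset_left, h⟩) hbl
  · exact hmin2 Z (ssubset_iff_subset_ne.mpr ⟨inter_subset_right, h⟩) hbl
end

section
/- Let MB be a Markov boundary of T (in the mutual-information sense, i.e., I(T; U) = I(T; MB) and MB is inclusion-minimal with this property), let Z₀ ⊆ MB, and let Z be a set with I(T; (MB \ Z₀) ∪ Z) = I(T; MB) and such that no proper subset of Z satisfies this equation. Then every element X of Z belongs to some Markov boundary of T. (Equivalence direction of Definition 5 ⇒ Definition 4.) -/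
open Set

/-- `S` is a Markov blanket of the (implicit) target in the mutual-information sense:
the mutual information `mi S = I(T; S)` equals the total mutual information `I(T; U)`. -/
def IsBlanketMI {ι : Type*} (mi : Set ι → ℝ) (S : Set ι) : Prop :=
  mi S = mi Set.univ

/-- A Markov boundary: an inclusion-minimal Markov blanket (mutual-information sense). -/
def IsBoundaryMI {ι : Type*} (mi : Set ι → ℝ) (S : Set ι) : Prop :=
  IsBlanketMI mi S ∧ ∀ S' ⊂ S, ¬ IsBlanketMI mi S'

theorem common_causal_def5_to_def4 {ι : Type*} [Fintype ι]
    (mi : Set ι → ℝ) (cmi : Set ι → Set ι → ℝ)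
    (chain : ∀ A B : Set ι, mi (A ∪ B) = mi B + cmi A B)
    (nonneg : ∀ A B : Set ι, 0 ≤ cmi A B)
    (MB Z₀ Z : Set ι)
    (hMB : IsBoundaryMI mi MB) (hZ₀ : Z₀ ⊆ MB)
    (hZ : mi ((MB \ Z₀) ∪ Z) = mi MB)
    (hmin : ∀ Z' ⊂ Z, mi ((MB \ Z₀) ∪ Z') ≠ mi MB) :
    ∀ X ∈ Z, ∃ M : Set ι, IsBoundaryMI mi M ∧ X ∈ M := by
  -- monotonicity of mi
  have mono : ∀ A B : Set ι, B ⊆ A → mi B ≤ mi A := by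
    intro A B hBA
    have h1 : A ∪ B = A := union_eq_self_of_subset_right hBA
    have := chain A B
    rw [h1] at this
    linarith [nonneg A B]
  set S : Set ι := (MB \ Z₀) ∪ Z with hS
  have hSb : IsBlanketMI mi S := by
    unfold IsBlanketMI
    rw [hZ]; exact hMB.1
  -- the family of blanket subsets of S is nonempty; pick a minimal one
  have hfin : WellFoundedLT (Set ι) := inferInstance
  obtain ⟨M, ⟨hMb, hMS⟩, hMmin⟩ :=
    hfin.wf.has_min {M : Set ι | IsBlanketMI mi M ∧ M ⊆ S} ⟨S, hSb, subset_rfl⟩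
  intro X hX
  refine ⟨M, ⟨hMb, ?_⟩, ?_⟩
  · intro S' hS' hS'b
    exact hMmin S' ⟨hS'b, hS'.subset.trans hMS⟩ hS'
  · by_contra hXM
    have hMsub : M ⊆ (MB \ Z₀) ∪ (Z \ {X}) := by
      intro y hy
      rcases hMS hy with h | h
      · exact Or.inl h
      · exact Or.inr ⟨h, fun he => hXM (he ▸ hy)⟩
    set W := (MB \ Z₀) ∪ (Z \ {X}) with hW
    have hWS : W ⊆ S := union_subset_union_right _ (diff_subset)
    have h1 : mi M ≤ mi W := mono _ _ hMsub
    have h2 : mi W ≤ mi univ := mono _ _ (subset_univ _)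
    have hWb : mi W = mi univ := le_antisymm h2 (hMb ▸ h1)
    have hZ' : (Z \ {X}) ⊂ Z := sdiff_singleton_ssubset.mpr hX
    exact hmin _ hZ' (hWb.trans hMB.1.symm)
end

section
/- Let MBᵢ be a Markov blanket of Tᵢ and Zᵢ ⊆ MBᵢ. If Z ⊆ U satisfies: (a) I(Zᵢ; Tᵢ | (MBᵢ ∪ Z) \ Zᵢ) = 0 (Z renders Zᵢ redundant), and (b) I(Tᵢ; MBᵢ ∪ Z) = I(Tᵢ; MBᵢ) (which follows from Z ⊥ Tᵢ | MBᵢ), then I((MBᵢ \ Zᵢ) ∪ Z; Tᵢ) = I(MBᵢ; Tᵢ); i.e., replacing Zᵢ by Z in the Markov blanket loses no information about Tᵢ. -/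
open Set

theorem replace_subset_keeps_information {ι : Type*} [Fintype ι]
    (mi : Set ι → ℝ) (cmi : Set ι → Set ι → ℝ)
    (chain : ∀ A B : Set ι, mi (A ∪ B) = mi B + cmi A B)
    (nonneg : ∀ A B : Set ι, 0 ≤ cmi A B)
    (MBi Zi Z : Set ι)
    (hblanket : ∀ A : Set ι, Disjoint A MBi → cmi A MBi = 0)
    (hZi : Zi ⊆ MBi)
    (ha : cmi Zi ((MBi ∪ Z) \ Zi) = 0)
    (hb : mi (MBi ∪ Z) = mi MBi) :
    mi ((MBi \ Zi) ∪ Z) = mi MBi := by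
  have mono : ∀ A B : Set ι, B ⊆ A → mi B ≤ mi A := by
    intro A B h
    have hc := chain A B
    rw [Set.union_eq_self_of_subset_right h] at hc
    linarith [nonneg A B]
  have key : mi ((MBi ∪ Z) \ Zi) = mi (MBi ∪ Z) := by
    have h := chain Zi ((MBi ∪ Z) \ Zi)
    rw [Set.union_diff_cancel (hZi.trans subset_union_left)] at h
    linarith
  have h1 : (MBi ∪ Z) \ Zi ⊆ (MBi \ Zi) ∪ Z := by
    intro x hx
    rcases hx.1 with h | h
    · exact Or.inl ⟨h, hx.2⟩
    · exact Or.inr h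
  have h2 : (MBi \ Zi) ∪ Z ⊆ MBi ∪ Z :=
    union_subset_union_left _ diff_subset
  linarith [mono _ _ h1, mono _ _ h2]
end

section
/- Minimal redundancy under intersection: assume the conditional-independence relation additionally satisfies the intersection property. Let M₁, M₂ be Markov boundaries of T₁, T₂ and S ⊆ (M₁ \ {T₂}) ∪ (M₂ \ {T₁}) be such that T₁ ⊥ (V \ S \ {T₁}) | S and T₂ ⊥ (V \ S \ {T₂}) | S. Then S = (M₁ \ {T₂}) ∪ (M₂ \ {T₁}); i.e., no proper subset of the constructed feature set is a joint Markov blanket of both labels. -/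
open Set

lemma blanket_inter {V : Type*} (CI : Set V → Set V → Set V → Prop)
    (decomp : ∀ A B C Z : Set V, CI A (B ∪ C) Z → CI A B Z)
    (weakUnion : ∀ A B C Z : Set V, CI A (B ∪ C) Z → CI A B (Z ∪ C))
    (contraction : ∀ A B C Z : Set V, CI A B (Z ∪ C) → CI A C Z → CI A (B ∪ C) Z)
    (inter : ∀ A B C Z : Set V, CI A B (Z ∪ C) → CI A C (Z ∪ B) → CI A (B ∪ C) Z)
    (T : V) (Z₁ Z₂ : Set V)
    (h₁ : (Z₁ ⊆ Set.univ \ {T}) ∧ CI {T} ((Set.univ \ Z₁) \ {T}) Z₁)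
    (h₂ : (Z₂ ⊆ Set.univ \ {T}) ∧ CI {T} ((Set.univ \ Z₂) \ {T}) Z₂) :
    (Z₁ ∩ Z₂ ⊆ Set.univ \ {T}) ∧ CI {T} ((Set.univ \ (Z₁ ∩ Z₂)) \ {T}) (Z₁ ∩ Z₂) := by
  have hT1 : T ∉ Z₁ := fun h => (h₁.1 h).2 rfl
  have hT2 : T ∉ Z₂ := fun h => (h₂.1 h).2 rfl
  have ciCast : ∀ {B B' Z Z' : Set V}, B = B' → Z = Z' → CI {T} B Z → CI {T} B' Z' := by
    rintro B _ Z _ rfl rfl h; exact h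
  have e1 : (Set.univ \ Z₁) \ {T} =
      (Z₂ \ Z₁) ∪ (((Set.univ \ Z₁) \ {T}) \ (Z₂ \ Z₁)) := by
    ext v
    have : v ∈ Z₂ → v ≠ T := fun h he => hT2 (he ▸ h)
    simp only [mem_diff, mem_union, mem_univ, mem_singleton_iff, true_and]
    tauto
  have e1' : (Set.univ \ Z₂) \ {T} =
      (Z₁ \ Z₂) ∪ (((Set.univ \ Z₂) \ {T}) \ (Z₁ \ Z₂)) := by
    ext v
    have : v ∈ Z₁ → v ≠ T := fun h he => hT1 (he ▸ h)
    simp only [mem_diff, mem_union, mem_univ, mem_singleton_iff, true_and]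
    tauto
  have eZ1 : Z₁ = (Z₁ ∩ Z₂) ∪ (Z₁ \ Z₂) := (inter_union_diff Z₁ Z₂).symm
  have eZ2 : Z₂ = (Z₁ ∩ Z₂) ∪ (Z₂ \ Z₁) := by
    rw [inter_comm]; exact (inter_union_diff Z₂ Z₁).symm
  have a : CI {T} (Z₂ \ Z₁) ((Z₁ ∩ Z₂) ∪ (Z₁ \ Z₂)) :=
    ciCast rfl eZ1 (decomp _ _ _ _ (ciCast e1 rfl h₁.2))
  have b : CI {T} (Z₁ \ Z₂) ((Z₁ ∩ Z₂) ∪ (Z₂ \ Z₁)) :=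
    ciCast rfl eZ2 (decomp _ _ _ _ (ciCast e1' rfl h₂.2))
  have c : CI {T} ((Z₂ \ Z₁) ∪ (Z₁ \ Z₂)) (Z₁ ∩ Z₂) := inter _ _ _ _ a b
  have e2 : (Set.univ \ Z₁) \ {T} =
      ((Set.univ \ (Z₁ ∪ Z₂)) \ {T}) ∪ (Z₂ \ Z₁) := by
    ext v
    have : v ∈ Z₂ → v ≠ T := fun h he => hT2 (he ▸ h)
    simp only [mem_diff, mem_union, mem_univ, mem_singleton_iff, true_and]
    tauto
  have e3 : Z₁ ∪ (Z₂ \ Z₁) = (Z₁ ∩ Z₂) ∪ ((Z₂ \ Z₁) ∪ (Z₁ \ Z₂)) := by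
    ext v
    simp only [mem_diff, mem_union, mem_inter_iff]
    tauto
  have w : CI {T} ((Set.univ \ (Z₁ ∪ Z₂)) \ {T})
      ((Z₁ ∩ Z₂) ∪ ((Z₂ \ Z₁) ∪ (Z₁ \ Z₂))) :=
    ciCast rfl e3 (weakUnion _ _ _ _ (ciCast e2 rfl h₁.2))
  have fin := contraction _ _ _ _ w c
  have e4 : ((Set.univ \ (Z₁ ∪ Z₂)) \ {T}) ∪ ((Z₂ \ Z₁) ∪ (Z₁ \ Z₂)) =
      (Set.univ \ (Z₁ ∩ Z₂)) \ {T} := by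
    ext v
    have h1 : v ∈ Z₁ → v ≠ T := fun h he => hT1 (he ▸ h)
    have h2 : v ∈ Z₂ → v ≠ T := fun h he => hT2 (he ▸ h)
    simp only [mem_diff, mem_union, mem_univ, mem_singleton_iff, mem_inter_iff, true_and]
    tauto
  exact ⟨fun v hv => h₁.1 hv.1, ciCast e4 rfl fin⟩

theorem minimal_redundancy_under_intersection {V : Type*} [Fintype V]
    (CI : Set V → Set V → Set V → Prop)
(symm : ∀ A B C : Set V, CI A B C → CI B A C)
    (decomp : ∀ A B C Z : Set V, CI A (B ∪ C) Z → CI A B Z)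
    (weakUnion : ∀ A B C Z : Set V, CI A (B ∪ C) Z → CI A B (Z ∪ C))
    (contraction : ∀ A B C Z : Set V, CI A B (Z ∪ C) → CI A C Z → CI A (B ∪ C) Z)
(inter : ∀ A B C Z : Set V, CI A B (Z ∪ C) → CI A C (Z ∪ B) → CI A (B ∪ C) Z)
    (T₁ T₂ : V) (M₁ M₂ S : Set V)
    (hM₁ : IsMarkovBoundary CI T₁ M₁)
    (hM₂ : IsMarkovBoundary CI T₂ M₂)
    (hS : S ⊆ (M₁ \ {T₂}) ∪ (M₂ \ {T₁}))
    (hS₁ : CI {T₁} ((Set.univ \ S) \ {T₁}) S)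
    (hS₂ : CI {T₂} ((Set.univ \ S) \ {T₂}) S) :
    S = (M₁ \ {T₂}) ∪ (M₂ \ {T₁}) := by
  have bsub : ∀ (T : V) (M Z : Set V), IsMarkovBoundary CI T M → IsMarkovBlanket CI T Z →
      M ⊆ Z := by
    intro T M Z hM hZ
    have hi : IsMarkovBlanket CI T (M ∩ Z) :=
      blanket_inter CI decomp weakUnion contraction inter T M Z hM.1 hZ
    by_contra hns
    exact hM.2 (M ∩ Z) ⟨inter_subset_left, fun hMsub => hns fun v hv => (hMsub hv).2⟩ hi
  have hT1S : T₁ ∉ S := fun h => by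
    rcases hS h with h' | h'
    · exact ((hM₁.1.1 h'.1).2 rfl)
    · exact h'.2 rfl
  have hT2S : T₂ ∉ S := fun h => by
    rcases hS h with h' | h'
    · exact h'.2 rfl
    · exact ((hM₂.1.1 h'.1).2 rfl)
  have hSbl₁ : IsMarkovBlanket CI T₁ S :=
    ⟨fun v hv => ⟨trivial, fun he => hT1S (he ▸ hv)⟩, hS₁⟩
  have hSbl₂ : IsMarkovBlanket CI T₂ S :=
    ⟨fun v hv => ⟨trivial, fun he => hT2S (he ▸ hv)⟩, hS₂⟩
  have h1 : M₁ ⊆ S := bsub T₁ M₁ S hM₁ hSbl₁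
  have h2 : M₂ ⊆ S := bsub T₂ M₂ S hM₂ hSbl₂
  exact Subset.antisymm hS (union_subset (fun v hv => h1 hv.1) (fun v hv => h2 hv.1))
end

section
/- If the conditional-independence relation satisfies the intersection property, then any target T has a unique Markov boundary: any two inclusion-minimal Markov blankets of T coincide. -/
open Set

theorem unique_boundary_of_intersection_property {V : Type*} [Fintype V]
    (CI : Set V → Set V → Set V → Prop)
(symm : ∀ A B C : Set V, CI A B C → CI B A C)
    (decomp : ∀ A B C Z : Set V, CI A (B ∪ C) Z → CI A B Z)
    (weakUnion : ∀ A B C Z : Set V, CI A (B ∪ C) Z → CI A B (Z ∪ C))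
    (contraction : ∀ A B C Z : Set V, CI A B (Z ∪ C) → CI A C Z → CI A (B ∪ C) Z)
(inter : ∀ A B C Z : Set V, CI A B (Z ∪ C) → CI A C (Z ∪ B) → CI A (B ∪ C) Z)
    (T : V) (M₁ M₂ : Set V)
    (h₁ : IsMarkovBoundary CI T M₁) (h₂ : IsMarkovBoundary CI T M₂) :
    M₁ = M₂ := by
  obtain ⟨⟨hs₁, hc₁⟩, hmin₁⟩ := h₁
  obtain ⟨⟨hs₂, hc₂⟩, hmin₂⟩ := h₂
  have hT₁ : T ∉ M₁ := fun h => (hs₁ h).2 rfl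
  have hT₂ : T ∉ M₂ := fun h => (hs₂ h).2 rfl
  set R : Set V := (Set.univ \ (M₁ ∪ M₂)) \ {T} with hR
  set A : Set V := M₁ \ M₂ with hA
  set B : Set V := M₂ \ M₁ with hB
  set C : Set V := M₁ ∩ M₂ with hC
  have e2a : (Set.univ \ M₂) \ {T} = R ∪ A := by
    ext x
    by_cases hx : x = T
    · subst hx; simp [hR, hA, hT₁]
    · simp [hR, hA, hx] <;> tauto
  have e2b : M₂ = C ∪ B := by
    ext x; simp [hC, hB] <;> tauto
  have e1a : (Set.univ \ M₁) \ {T} = B ∪ R := by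
    ext x
    by_cases hx : x = T
    · subst hx; simp [hR, hB, hT₂]
    · simp [hR, hB, hx] <;> tauto
  have e1b : M₁ = C ∪ A := by
    ext x; simp [hC, hA] <;> tauto
  have h2' : CI {T} (R ∪ A) (C ∪ B) := by rw [← e2a, ← e2b]; exact hc₂
  have h1' : CI {T} (B ∪ R) (C ∪ A) := by rw [← e1a, ← e1b]; exact hc₁
  have wu : CI {T} B ((C ∪ A) ∪ R) := weakUnion _ _ _ _ h1'
  have wu' : CI {T} B (C ∪ (R ∪ A)) := by
    have : (C ∪ A) ∪ R = C ∪ (R ∪ A) := by ext x; simp <;> tauto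
    rwa [this] at wu
  have hkey : CI {T} ((R ∪ A) ∪ B) C := inter _ _ _ _ h2' wu'
  have eC : (Set.univ \ C) \ {T} = (R ∪ A) ∪ B := by
    ext x
    by_cases hx : x = T
    · subst hx; simp [hR, hA, hB, hC, hT₁, hT₂]
    · simp [hR, hA, hB, hC, hx] <;> tauto
  have key : IsMarkovBlanket CI T C := by
    refine ⟨fun x hx => hs₁ hx.1, ?_⟩
    rwa [eC]
  have h12 : C = M₁ := by
    by_contra hne
    exact hmin₁ C (lt_of_le_of_ne Set.inter_subset_left hne) key
  have h21 : C = M₂ := by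
    by_contra hne
    exact hmin₂ C (lt_of_le_of_ne Set.inter_subset_right hne) key
  rw [← h12, ← h21]
end

section
/- The intersection of two Markov blankets of the same target is again a Markov blanket, provided the intersection property holds: if Z₁ and Z₂ are Markov blankets of T and the relation satisfies intersection, then Z₁ ∩ Z₂ is a Markov blanket of T. -/
open Set

theorem blanket_intersection_of_intersection_property {V : Type*} [Fintype V]
    (CI : Set V → Set V → Set V → Prop)
(symm : ∀ A B C : Set V, CI A B C → CI B A C)
    (decomp : ∀ A B C Z : Set V, CI A (B ∪ C) Z → CI A B Z)
    (weakUnion : ∀ A B C Z : Set V, CI A (B ∪ C) Z → CI A B (Z ∪ C))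
    (contraction : ∀ A B C Z : Set V, CI A B (Z ∪ C) → CI A C Z → CI A (B ∪ C) Z)
(inter : ∀ A B C Z : Set V, CI A B (Z ∪ C) → CI A C (Z ∪ B) → CI A (B ∪ C) Z)
    (T : V) (Z₁ Z₂ : Set V)
    (h₁ : IsMarkovBlanket CI T Z₁) (h₂ : IsMarkovBlanket CI T Z₂) :
    IsMarkovBlanket CI T (Z₁ ∩ Z₂) := by
  obtain ⟨hs₁, hc₁⟩ := h₁
  obtain ⟨hs₂, hc₂⟩ := h₂
  have hT1 : T ∉ Z₁ := fun h => (hs₁ h).2 rfl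
  have hT2 : T ∉ Z₂ := fun h => (hs₂ h).2 rfl
  refine ⟨fun x hx => ⟨trivial, fun hxt => hT1 (hxt ▸ hx.1)⟩, ?_⟩
  -- rewrite h₂'s condition
  have e1 : (Set.univ \ Z₂) \ {T} =
      (Z₁ \ Z₂) ∪ ((Set.univ \ (Z₁ ∪ Z₂)) \ {T}) := by
    ext x
    simp only [mem_diff, mem_univ, true_and, mem_singleton_iff, mem_union]
    constructor
    · rintro ⟨hx2, hxt⟩
      by_cases h : x ∈ Z₁
      · exact Or.inl ⟨h, hx2⟩
      · exact Or.inr ⟨fun hh => hh.elim h hx2, hxt⟩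
    · rintro (⟨h1, h2⟩ | ⟨h1, h2⟩)
      · exact ⟨h2, fun hh => hT1 (hh ▸ h1)⟩
      · exact ⟨fun hh => h1 (Or.inr hh), h2⟩
  rw [e1] at hc₂
  have step := weakUnion {T} (Z₁ \ Z₂) ((Set.univ \ (Z₁ ∪ Z₂)) \ {T}) Z₂ hc₂
  have e2 : Z₂ ∪ ((Set.univ \ (Z₁ ∪ Z₂)) \ {T}) =
      (Z₁ ∩ Z₂) ∪ ((Set.univ \ Z₁) \ {T}) := by
    ext x
    simp only [mem_union, mem_diff, mem_univ, true_and, mem_singleton_iff, mem_inter_iff]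
    constructor
    · rintro (h | ⟨h1, h2⟩)
      · by_cases hx1 : x ∈ Z₁
        · exact Or.inl ⟨hx1, h⟩
        · exact Or.inr ⟨hx1, fun hh => hT2 (hh ▸ h)⟩
      · exact Or.inr ⟨fun hh => h1 (Or.inl hh), h2⟩
    · rintro (⟨h1, h2⟩ | ⟨h1, h2⟩)
      · exact Or.inl h2
      · by_cases hx2 : x ∈ Z₂
        · exact Or.inl hx2
        · exact Or.inr ⟨fun hh => hh.elim h1 hx2, h2⟩
  rw [e2] at step
  have e3 : Z₁ = (Z₁ ∩ Z₂) ∪ (Z₁ \ Z₂) := by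
    ext x
    simp only [mem_union, mem_inter_iff, mem_diff]
    by_cases h : x ∈ Z₂ <;> tauto
  have hc₁' : CI {T} ((Set.univ \ Z₁) \ {T}) ((Z₁ ∩ Z₂) ∪ (Z₁ \ Z₂)) := by
    rw [← e3]; exact hc₁
  have main := inter {T} ((Set.univ \ Z₁) \ {T}) (Z₁ \ Z₂) (Z₁ ∩ Z₂) hc₁' step
  have e4 : ((Set.univ \ Z₁) \ {T}) ∪ (Z₁ \ Z₂) =
      (Set.univ \ (Z₁ ∩ Z₂)) \ {T} := by
    ext x
    simp only [mem_union, mem_diff, mem_univ, true_and, mem_singleton_iff, mem_inter_iff]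
    constructor
    · rintro (⟨h1, h2⟩ | ⟨h1, h2⟩)
      · exact ⟨fun hh => h1 hh.1, h2⟩
      · exact ⟨fun hh => h2 hh.2, fun hh => hT1 (hh ▸ h1)⟩
    · rintro ⟨h1, h2⟩
      by_cases h : x ∈ Z₁
      · exact Or.inr ⟨h, fun hh => h1 ⟨h, hh⟩⟩
      · exact Or.inl ⟨h, h2⟩
  rw [e4] at main
  exact main
end

section
/- From T ⊥ U \ MB₁ \ {T} | MB₁ and T ⊥ MB₁ \ MB₂ | MB₁ ∩ MB₂, the contraction property yields T ⊥ (U \ MB₁ \ {T}) ∪ (MB₁ \ MB₂) | MB₁ ∩ MB₂, i.e., T ⊥ U \ (MB₁ ∩ MB₂) \ {T} | MB₁ ∩ MB₂ whenever MB₂ ⊆ MB₁ ∪ (U \ MB₁), hence MB₁ ∩ MB₂ is a Markov blanket of T. -/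
open Set

theorem contraction_yields_blanket_intersection {V : Type*} [Fintype V]
    (CI : Set V → Set V → Set V → Prop)
(symm : ∀ A B C : Set V, CI A B C → CI B A C)
    (decomp : ∀ A B C Z : Set V, CI A (B ∪ C) Z → CI A B Z)
    (weakUnion : ∀ A B C Z : Set V, CI A (B ∪ C) Z → CI A B (Z ∪ C))
    (contraction : ∀ A B C Z : Set V, CI A B (Z ∪ C) → CI A C Z → CI A (B ∪ C) Z)
    (T : V) (MB₁ MB₂ : Set V)
    (h₁ : IsMarkovBlanket CI T MB₁) (h₂ : IsMarkovBlanket CI T MB₂)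
    (h : CI {T} (MB₁ \ MB₂) (MB₁ ∩ MB₂)) :
    CI {T} (((Set.univ \ MB₁) \ {T}) ∪ (MB₁ \ MB₂)) (MB₁ ∩ MB₂) ∧
    CI {T} ((Set.univ \ (MB₁ ∩ MB₂)) \ {T}) (MB₁ ∩ MB₂) ∧
    IsMarkovBlanket CI T (MB₁ ∩ MB₂) := by
  obtain ⟨hsub₁, hci₁⟩ := h₁
  have hT : T ∉ MB₁ := fun hmem => (hsub₁ hmem).2 rfl
  have key : CI {T} (((Set.univ \ MB₁) \ {T}) ∪ (MB₁ \ MB₂)) (MB₁ ∩ MB₂) := by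
    apply contraction
    · have : (MB₁ ∩ MB₂) ∪ (MB₁ \ MB₂) = MB₁ := by
        ext x; simp [Set.mem_diff, Set.mem_inter_iff]
      rw [this]; exact hci₁
    · exact h
  have heq : ((Set.univ \ MB₁) \ {T}) ∪ (MB₁ \ MB₂)
      = (Set.univ \ (MB₁ ∩ MB₂)) \ {T} := by
    ext x
    simp only [Set.mem_union, Set.mem_diff, Set.mem_univ, true_and,
      Set.mem_singleton_iff, Set.mem_inter_iff]
    constructor
    · rintro (⟨hx, hxT⟩ | ⟨hx, hxn⟩)
      · exact ⟨fun hc => hx hc.1, hxT⟩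
      · exact ⟨fun hc => hxn hc.2, fun hc => hT (hc ▸ hx)⟩
    · rintro ⟨hx, hxT⟩
      by_cases hm : x ∈ MB₁
      · exact Or.inr ⟨hm, fun hc => hx ⟨hm, hc⟩⟩
      · exact Or.inl ⟨hm, hxT⟩
  have key2 : CI {T} ((Set.univ \ (MB₁ ∩ MB₂)) \ {T}) (MB₁ ∩ MB₂) := heq ▸ key
  exact ⟨key, key2, ⟨fun x hx => ⟨trivial, fun hc => hT (hc ▸ hx.1)⟩, key2⟩⟩
end
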